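/- (Necessity of independent components along the failed node) In a linear (k,α) MSR exact-regenerating code with β = 1 and d = α + k − 1, suppose a failed systematic node l is regenerated from the k−1 surviving systematic nodes and α non-systematic nodes, each passing one vector. If Y is an α × d matrix with Y·V = G^{(l)} where V stacks the d passed vectors, then the α vectors v^{(m_i,l)}_l (components along node l of the vectors passed by the α non-systematic nodes) are linearly independent in F_q^α. -/

import Mathlib

/-- Necessity of independent components along the failed node: if the failed systematic
node `l` is exactly regenerated (via recovery coefficients `c`, `b`) from the vectors `u m`
passed by the `k-1` surviving systematic nodes (whose block-`l` components vanish) and the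
vectors `w j` passed by `α` non-systematic nodes, then the block-`l` components of the
`w j` are linearly independent. -/
theorem statement10 {F : Type*} [Field F] {k α : ℕ} (l : Fin k)
    (u : {m : Fin k // m ≠ l} → (Fin k × Fin α → F))
    (w : Fin α → (Fin k × Fin α → F))
    (hu : ∀ m t, u m (l, t) = 0)
    (c : Fin α → {m : Fin k // m ≠ l} → F) (b : Fin α → Fin α → F)
    (hregen : ∀ (i : Fin α) (q : Fin k × Fin α),
      (if q.1 = l ∧ q.2 = i then (1 : F) else 0) =
        (∑ m, c i m * u m q) + ∑ j, b i j * w j q) :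
    LinearIndependent F (fun j : Fin α => fun t : Fin α => w j (l, t)) := by
  set W : Matrix (Fin α) (Fin α) F := fun j t => w j (l, t) with hW
  set B : Matrix (Fin α) (Fin α) F := fun i j => b i j with hB
  have hBW : B * W = 1 := by
    ext i t
    have := (hregen i (l, t)).symm
    simp only [hu, mul_zero, Finset.sum_const_zero, zero_add] at this
    simpa [Matrix.mul_apply, Matrix.one_apply, eq_comm, and_comm] using this
  have hWB : IsUnit W := (Matrix.isUnit_iff_isUnit_det W).mpr (Matrix.isUnit_det_of_right_inverse (mul_eq_one_comm.mp hBW))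
  exact Matrix.linearIndependent_rows_iff_isUnit.mpr hWB
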